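/- Let u and v be real numbers, and consider real angles θ, φ subject only to the constraint u·sin 2θ − v·sin 2φ = 0. Then: (i) for every real s there exist θ, φ satisfying the constraint with θ + φ = s; (ii) for all θ, φ satisfying the constraint, the quantity f = u·cos 2θ + v·cos 2φ satisfies ||u| − |v|| ≤ |f| ≤ |u| + |v|; and (iii) for every real t with ||u| − |v|| ≤ |t| ≤ |u| + |v| there exist θ, φ satisfying the constraint with u·cos 2θ + v·cos 2φ = t. -/

import Mathlib

open Real

-- IVT lemma used for part (iii): nonnegative case
lemma auxIII (a b t : ℝ) (hb : 0 ≤ b) (hba : b ≤ a) (h1 : a - b ≤ t) (h2 : t ≤ a + b) :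
    ∃ α β : ℝ, a * Real.sin α - b * Real.sin β = 0 ∧ a * Real.cos α + b * Real.cos β = t := by
  rcases eq_or_lt_of_le (hb.trans hba) with ha | ha
  · refine ⟨0, 0, by simp, ?_⟩
    have hb0 : b = 0 := le_antisymm (hba.trans ha.symm.le) hb
    simp [← ha, hb0]
    linarith [h1, h2, hb0, ha.symm]
  · set g : ℝ → ℝ := fun x => a * Real.cos (Real.arcsin (b / a * Real.sin x)) + b * Real.cos x with hgdef
    have hcont : Continuous g := by
      apply Continuous.add
      · exact continuous_const.mul (Real.continuous_cos.comp
          (Real.continuous_arcsin.comp (continuous_const.mul Real.continuous_sin)))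
      · exact continuous_const.mul Real.continuous_cos
    have g0 : g 0 = a + b := by simp [hgdef]
    have gpi : g π = a - b := by simp [hgdef]; ring
    have ht : t ∈ Set.uIcc (g 0) (g π) := by
      rw [g0, gpi]
      exact Set.mem_uIcc.mpr (Or.inr ⟨h1, h2⟩)
    obtain ⟨x, -, hx⟩ := intermediate_value_uIcc hcont.continuousOn ht
    have hbd : |b / a * Real.sin x| ≤ 1 := by
      rw [abs_mul]
      have : |b / a| ≤ 1 := by
        rw [abs_of_nonneg (div_nonneg hb ha.le)]
        exact (div_le_one ha).mpr hba
      calc |b / a| * |Real.sin x| ≤ 1 * 1 :=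
            mul_le_mul this (Real.abs_sin_le_one x) (abs_nonneg _) zero_le_one
        _ = 1 := by ring
    rw [abs_le] at hbd
    refine ⟨Real.arcsin (b / a * Real.sin x), x, ?_, hx⟩
    rw [Real.sin_arcsin hbd.1 hbd.2]
    field_simp
    ring

lemma signfix (u : ℝ) (α : ℝ) : ∃ γ : ℝ,
    u * Real.sin γ = |u| * Real.sin α ∧ u * Real.cos γ = |u| * Real.cos α := by
  rcases le_or_gt 0 u with h | h
  · exact ⟨α, by rw [abs_of_nonneg h], by rw [abs_of_nonneg h]⟩
  · refine ⟨α + π, ?_, ?_⟩ <;>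
      simp [Real.sin_add, Real.cos_add, abs_of_neg h]

-- part (i)
lemma partI (u v : ℝ) (s : ℝ) : ∃ θ φ : ℝ,
    u * Real.sin (2 * θ) - v * Real.sin (2 * φ) = 0 ∧ θ + φ = s := by
  set g : ℝ → ℝ := fun θ => u * Real.sin (2 * θ) - v * Real.sin (2 * (s - θ)) with hgdef
  have hcont : Continuous g := by
    apply Continuous.sub
    · exact continuous_const.mul (Real.continuous_sin.comp (continuous_const.mul continuous_id))
    · exact continuous_const.mul (Real.continuous_sin.comp
        (continuous_const.mul (continuous_const.sub continuous_id)))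
  have g0 : g 0 = -(v * Real.sin (2 * s)) := by simp [hgdef]
  have gp : g (π / 2) = v * Real.sin (2 * s) := by
    have h1 : 2 * (π / 2) = π := by ring
    have h2 : 2 * (s - π / 2) = 2 * s - π := by ring
    simp [hgdef, h1, h2, Real.sin_sub, Real.cos_pi, Real.sin_pi]
  have h0 : (0 : ℝ) ∈ Set.uIcc (g 0) (g (π / 2)) := by
    rw [g0, gp]
    rcases le_total 0 (v * Real.sin (2 * s)) with h | h
    · exact Set.mem_uIcc.mpr (Or.inl ⟨by linarith, h⟩)
    · exact Set.mem_uIcc.mpr (Or.inr ⟨h, by linarith⟩)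
  obtain ⟨θ, -, hθ⟩ := intermediate_value_uIcc hcont.continuousOn h0
  exact ⟨θ, s - θ, hθ, by ring⟩

-- part (ii)
lemma partII (u v : ℝ) (θ φ : ℝ) (h : u * Real.sin (2 * θ) - v * Real.sin (2 * φ) = 0) :
    abs (|u| - |v|) ≤ |u * Real.cos (2 * θ) + v * Real.cos (2 * φ)| ∧
    |u * Real.cos (2 * θ) + v * Real.cos (2 * φ)| ≤ |u| + |v| := by
  constructor
  · have h1 := Real.sin_sq_add_cos_sq (2 * θ)
    have h2 := Real.sin_sq_add_cos_sq (2 * φ)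
    have key : (u * Real.cos (2 * θ) + v * Real.cos (2 * φ)) ^ 2 =
        u ^ 2 + v ^ 2 + 2 * u * v * Real.cos (2 * θ + 2 * φ) := by
      rw [Real.cos_add]
      linear_combination u ^ 2 * h1 + v ^ 2 * h2 -
        (u * Real.sin (2 * θ) - v * Real.sin (2 * φ)) * h
    have hc := Real.neg_one_le_cos (2 * θ + 2 * φ)
    have hsq : (|u| - |v|) ^ 2 ≤ (u * Real.cos (2 * θ) + v * Real.cos (2 * φ)) ^ 2 := by
      have huv : |u| * |v| = |u * v| := (abs_mul u v).symm
      have hc2 := Real.cos_le_one (2 * θ + 2 * φ)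
      have p1 : 0 ≤ (|u * v| + u * v) * (1 + Real.cos (2 * θ + 2 * φ)) :=
        mul_nonneg (by linarith [neg_abs_le (u * v)]) (by linarith)
      have p2 : 0 ≤ (|u * v| - u * v) * (1 - Real.cos (2 * θ + 2 * φ)) :=
        mul_nonneg (by linarith [le_abs_self (u * v)]) (by linarith)
      nlinarith [key, p1, p2, sq_abs u, sq_abs v, huv]
    nlinarith [hsq, abs_nonneg (u * Real.cos (2 * θ) + v * Real.cos (2 * φ)),
      abs_nonneg (|u| - |v|), sq_abs (u * Real.cos (2 * θ) + v * Real.cos (2 * φ)),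
      sq_abs (|u| - |v|)]
  · calc |u * Real.cos (2 * θ) + v * Real.cos (2 * φ)|
        ≤ |u * Real.cos (2 * θ)| + |v * Real.cos (2 * φ)| := abs_add_le _ _
      _ ≤ |u| + |v| := by
          rw [abs_mul, abs_mul]
          have := mul_le_mul_of_nonneg_left (Real.abs_cos_le_one (2 * θ)) (abs_nonneg u)
          have := mul_le_mul_of_nonneg_left (Real.abs_cos_le_one (2 * φ)) (abs_nonneg v)
          linarith

-- part (iii)
lemma partIII (u v : ℝ) (t : ℝ) (habs : abs (|u| - |v|) ≤ |t|) (ht2 : |t| ≤ |u| + |v|) :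
    ∃ θ φ : ℝ, u * Real.sin (2 * θ) - v * Real.sin (2 * φ) = 0 ∧
      u * Real.cos (2 * θ) + v * Real.cos (2 * φ) = t := by
  obtain ⟨α, β, hcon, hsum⟩ : ∃ α β : ℝ,
      |u| * Real.sin α - |v| * Real.sin β = 0 ∧ |u| * Real.cos α + |v| * Real.cos β = |t| := by
    rcases le_total (|v|) (|u|) with hle | hle
    · refine auxIII (|u|) (|v|) (|t|) (abs_nonneg v) hle ?_ ht2
      rw [abs_of_nonneg (sub_nonneg.mpr hle)] at habs; exact habs
    · obtain ⟨β, α, h1, h2⟩ := auxIII (|v|) (|u|) (|t|) (abs_nonneg u) hle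
        (by rw [abs_of_nonpos (sub_nonpos.mpr hle)] at habs; linarith) (by linarith)
      exact ⟨α, β, by linarith, by linarith⟩
  obtain ⟨γu, hus, huc⟩ := signfix u α
  obtain ⟨γv, hvs, hvc⟩ := signfix v β
  rcases le_or_gt 0 t with hpos | hneg
  · refine ⟨γu / 2, γv / 2, ?_, ?_⟩
    · have e1 : 2 * (γu / 2) = γu := by ring
      have e2 : 2 * (γv / 2) = γv := by ring
      rw [e1, e2, hus, hvs]; exact hcon
    · have e1 : 2 * (γu / 2) = γu := by ring
      have e2 : 2 * (γv / 2) = γv := by ring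
      rw [e1, e2, huc, hvc, hsum]; exact abs_of_nonneg hpos
  · refine ⟨(γu + π) / 2, (γv + π) / 2, ?_, ?_⟩
    · have e1 : 2 * ((γu + π) / 2) = γu + π := by ring
      have e2 : 2 * ((γv + π) / 2) = γv + π := by ring
      rw [e1, e2]
      simp only [Real.sin_add, Real.cos_add, Real.sin_pi, Real.cos_pi]
      nlinarith [hus, hvs, hcon]
    · have e1 : 2 * ((γu + π) / 2) = γu + π := by ring
      have e2 : 2 * ((γv + π) / 2) = γv + π := by ring
      rw [e1, e2]
      simp only [Real.sin_add, Real.cos_add, Real.sin_pi, Real.cos_pi]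
      have habs' : |t| = -t := abs_of_neg hneg
      nlinarith [huc, hvc, hsum, habs']

/-- Lemma 14 of the paper: if `θ` and `φ` are constrained only by
`u sin 2θ - v sin 2φ = 0`, then `θ + φ` can take any value, and the range of
`f = u cos 2θ + v cos 2φ` is exactly `abs (|u| - |v|) ≤ |f| ≤ |u| + |v|`. -/
theorem angle_constraint_range (u v : ℝ) :
    (∀ s : ℝ, ∃ θ φ : ℝ,
        u * Real.sin (2 * θ) - v * Real.sin (2 * φ) = 0 ∧ θ + φ = s) ∧
    (∀ θ φ : ℝ, u * Real.sin (2 * θ) - v * Real.sin (2 * φ) = 0 →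
        abs (|u| - |v|) ≤ |u * Real.cos (2 * θ) + v * Real.cos (2 * φ)| ∧
        |u * Real.cos (2 * θ) + v * Real.cos (2 * φ)| ≤ |u| + |v|) ∧
    (∀ t : ℝ, abs (|u| - |v|) ≤ |t| → |t| ≤ |u| + |v| →
        ∃ θ φ : ℝ, u * Real.sin (2 * θ) - v * Real.sin (2 * φ) = 0 ∧
          u * Real.cos (2 * θ) + v * Real.cos (2 * φ) = t) := by
  exact ⟨partI u v, partII u v, partIII u v⟩
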